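/- Let E be a field of characteristic ≠ 2 with finite u-invariant u(E) = r. Let L = E(√d) be a quadratic extension, D₀ a quaternion division algebra over E with canonical involution τ₀, D = D₀ ⊗_E L with unitary involution τ = τ₀ ⊗ ι. Then for any hermitian form h₀ of rank m > r/3 over (D₀, τ₀), the extended hermitian form ρ̃(h₀) over (D, τ) is isotropic. -/

import Mathlib

open scoped Quaternion

/-- The unitary involution `τ = τ₀ ⊗ ι` on `D = D₀ ⊗_E L = ℍ[L, a, b]`:
quaternion conjugation combined with the nontrivial automorphism `ι = σ` of `L/E`
applied to the coefficients. -/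
def quatUnitaryInv {E L : Type*} [Field E] [Field L] [Algebra E L]
    (σ : L ≃ₐ[E] L) {a b : L} (x : ℍ[L, a, b]) : ℍ[L, a, b] :=
  ⟨σ x.re, -σ x.imI, -σ x.imJ, -σ x.imK⟩

private lemma quat_key (L : Type*) [Field L] (c₁ c₂ lm p q t : L) :
    (⟨0,p,q,t⟩ : ℍ[L,c₁,c₂]) * (algebraMap L _ lm) * ⟨0,p,q,t⟩
      = algebraMap L _ (lm * (c₁*(p*p) + c₂*(q*q) - c₁*c₂*(t*t))) := by
  ext <;> simp [QuaternionAlgebra.coe_algebraMap, QuaternionAlgebra.re_mul,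
    QuaternionAlgebra.imI_mul, QuaternionAlgebra.imJ_mul, QuaternionAlgebra.imK_mul] <;> ring

/-- **Isotropy of extended hermitian forms over small-u-invariant fields.**
Let `E` be a field of characteristic `≠ 2` with finite u-invariant `u(E) = r`.
Let `L = E(√d)` be a quadratic extension with nontrivial automorphism `ι`, `D₀` a
quaternion division algebra over `E` with canonical involution `τ₀`, and
`D = D₀ ⊗_E L` with the unitary involution `τ = τ₀ ⊗ ι`.  Then for any hermitian
form `h₀ = ⟨λ₁, …, λₘ⟩` of rank `m > r/3` over `(D₀, τ₀)`, the extended hermitian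
form `ρ̃(h₀)` over `(D, τ)` (the τ-sesquilinear extension of `h₀`, i.e. the same
diagonal form read over `(D, τ)`) is isotropic. -/
theorem extended_hermitian_form_isotropic_of_u_invariant
    (E : Type*) [Field E] (hchar : (2 : E) ≠ 0)
    (r : ℕ)
    (hu₁ : ∀ (n : ℕ) (φ : QuadraticForm E (Fin n → E)), φ.Anisotropic → n ≤ r)
    (hu₂ : ∃ φ : QuadraticForm E (Fin r → E), φ.Anisotropic)
    (d : E) (hd : ∀ c : E, c ^ 2 ≠ d)
    (L : Type*) [Field L] [Algebra E L]
    (s : L) (hs : s ^ 2 = algebraMap E L d)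
    (σ : L ≃ₐ[E] L) (hσs : σ s = -s) (hσinv : ∀ x : L, σ (σ x) = x)
    (hbasis : ∀ x : L, ∃! p : E × E,
      x = algebraMap E L p.1 + algebraMap E L p.2 * s)
    (a b : E)
    (hdiv : ∀ x : ℍ[E, a, b], x ≠ 0 → IsUnit x)
    (m : ℕ) (hm : r < 3 * m)
    (lam : Fin m → E) (hlam : ∀ i, lam i ≠ 0) :
    ∃ x : Fin m → ℍ[L, algebraMap E L a, algebraMap E L b],
      x ≠ 0 ∧
      ∑ i, quatUnitaryInv σ (x i) *
          algebraMap L ℍ[L, algebraMap E L a, algebraMap E L b]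
            (algebraMap E L (lam i)) * x i = 0 := by
  set α := algebraMap E L with hα
  -- basic nonvanishing facts
  have hd0 : d ≠ 0 := fun h => hd 0 (by simp [h])
  have hs0 : s ≠ 0 := by
    intro h
    apply hd0
    have : α d = 0 := by rw [← hs, h]; ring
    exact (map_eq_zero α).mp this
  -- the rank 3m quadratic form over E
  set c : Fin 3 → E := ![a, b, -(a*b)] with hc
  set w : Fin (m*3) → E :=
    fun k => lam (finProdFinEquiv.symm k).1 * d * c (finProdFinEquiv.symm k).2 with hw
  have hiso : ¬ (QuadraticMap.weightedSumSquares E w).Anisotropic := by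
    intro h
    have := hu₁ (m*3) (QuadraticMap.weightedSumSquares E w) h
    omega
  rw [QuadraticMap.Anisotropic] at hiso
  push_neg at hiso
  obtain ⟨v, hv0, hvne⟩ := hiso
  set u : Fin m → Fin 3 → E := fun i j => v (finProdFinEquiv (i, j)) with hu
  -- the E-valued terms
  set t : Fin m → E := fun i =>
    lam i * d * (a*(u i 0 * u i 0) + b*(u i 1 * u i 1) - a*b*(u i 2 * u i 2)) with ht
  have hsum : ∑ i, t i = 0 := by
    have h1 : (QuadraticMap.weightedSumSquares E w) v = ∑ k, w k • (v k * v k) :=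
      QuadraticMap.weightedSumSquares_apply w v
    rw [h1, ← Equiv.sum_comp finProdFinEquiv (fun k => w k • (v k * v k)),
      Fintype.sum_prod_type] at hv0
    rw [← hv0]
    refine Finset.sum_congr rfl fun i _ => ?_
    rw [Fin.sum_univ_three]
    simp only [hw, Equiv.symm_apply_apply, hc, smul_eq_mul, ht, hu]
    simp [Matrix.cons_val_zero, Matrix.cons_val_one]
    ring
  -- the quaternionic vector
  set x : Fin m → ℍ[L, α a, α b] :=
    fun i => ⟨0, s * α (u i 0), s * α (u i 1), s * α (u i 2)⟩ with hx
  refine ⟨x, ?_, ?_⟩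
  · -- nonzero
    intro hx0
    apply hvne
    funext k
    set i := (finProdFinEquiv.symm k).1 with hi
    set j := (finProdFinEquiv.symm k).2 with hj
    have hk : finProdFinEquiv (i, j) = k := by
      have : ((i, j) : Fin m × Fin 3) = finProdFinEquiv.symm k := rfl
      rw [this, finProdFinEquiv.apply_symm_apply]
    have hxi : x i = 0 := congrFun hx0 i
    have hcomp : ∀ j' : Fin 3, s * α (u i j') = 0 := by
      intro j'
      fin_cases j'
      · simpa [hx] using congrArg QuaternionAlgebra.imI hxi
      · simpa [hx] using congrArg QuaternionAlgebra.imJ hxi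
      · simpa [hx] using congrArg QuaternionAlgebra.imK hxi
    have huij : u i j = 0 := by
      rcases mul_eq_zero.mp (hcomp j) with h | h
      · exact absurd h hs0
      · exact (map_eq_zero α).mp h
    have : v (finProdFinEquiv (i, j)) = v k := congrArg v hk
    rw [← this]
    exact huij
  · -- the hermitian sum vanishes
    have hτ : ∀ i, quatUnitaryInv σ (x i) = x i := by
      intro i
      have hσmul : ∀ e : E, σ (s * α e) = -(s * α e) := by
        intro e
        rw [map_mul, hσs, AlgEquiv.commutes]
        ring
      ext <;> simp [quatUnitaryInv, hx, hσmul]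
    have hterm : ∀ i, quatUnitaryInv σ (x i) *
        algebraMap L ℍ[L, α a, α b] (α (lam i)) * x i
        = algebraMap L ℍ[L, α a, α b] (α (t i)) := by
      intro i
      rw [hτ i, hx]
      rw [quat_key]
      congr 1
      simp only [ht, map_mul, map_add, map_sub]
      rw [← hs]
      ring
    calc ∑ i, quatUnitaryInv σ (x i) *
          algebraMap L ℍ[L, α a, α b] (α (lam i)) * x i
        = ∑ i, algebraMap L ℍ[L, α a, α b] (α (t i)) :=
          Finset.sum_congr rfl fun i _ => hterm i
      _ = algebraMap L ℍ[L, α a, α b] (α (∑ i, t i)) := by rw [map_sum, map_sum]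
      _ = 0 := by rw [hsum, map_zero, map_zero]
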